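/- Let r ≥ 4 be an integer and let c : Fin (2r+5) × Fin (11r+1) → Fin r be a coloring of the ((2r+5) × (11r+1))-grid containing no monochromatic grid rectangle and no rainbow grid rectangle. Let t be a color such that the set J = {j : c(0,j) = t} of columns on which row 0 has color t satisfies |J| ≥ 12. Then there are at least 5 row indices i ≠ 0 such that the set of colors {c(i,j) : j ∈ J} contains at least 3 colors different from t. -/

import Mathlib

open Finset

theorem grid_claim3
    (r : ℕ) (hr : 4 ≤ r)
    (c : Fin (2 * r + 5) × Fin (11 * r + 1) → Fin r)
    (hmono : ¬ ∃ (i i' : Fin (2 * r + 5)) (j j' : Fin (11 * r + 1)),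
      i ≠ i' ∧ j ≠ j' ∧
      c (i, j) = c (i', j) ∧ c (i', j) = c (i, j') ∧ c (i, j') = c (i', j'))
    (hrainbow : ¬ ∃ (i i' : Fin (2 * r + 5)) (j j' : Fin (11 * r + 1)),
      i ≠ i' ∧ j ≠ j' ∧
      c (i, j) ≠ c (i', j) ∧ c (i, j) ≠ c (i, j') ∧ c (i, j) ≠ c (i', j') ∧
      c (i', j) ≠ c (i, j') ∧ c (i', j) ≠ c (i', j') ∧ c (i, j') ≠ c (i', j'))
    (t : Fin r)
    (hJ : 12 ≤ (Finset.univ.filter fun j : Fin (11 * r + 1) => c (0, j) = t).card) :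
    5 ≤ (Finset.univ.filter fun i : Fin (2 * r + 5) =>
          i ≠ 0 ∧
          3 ≤ (((Finset.univ.filter fun j : Fin (11 * r + 1) => c (0, j) = t).image
                  fun j => c (i, j)).filter fun s => s ≠ t).card).card := by
  classical
  by_contra hcon
  push_neg at hcon
  set J : Finset (Fin (11 * r + 1)) := Finset.univ.filter fun j => c (0, j) = t with hJdef
  -- core lemma: two rows can share a color on at most one column of J
  have key : ∀ (i i' : Fin (2 * r + 5)), i ≠ i' → ∀ s : Fin r,
      (J.filter fun j => c (i, j) = s ∧ c (i', j) = s).card ≤ 1 := by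
    intro i i' hii s
    by_contra h
    push_neg at h
    obtain ⟨j, hj, j', hj', hjj⟩ := Finset.one_lt_card.mp h
    simp only [mem_filter] at hj hj'
    exact hmono ⟨i, i', j, j', hii, hjj,
      hj.2.1.trans hj.2.2.symm, hj.2.2.trans hj'.2.1.symm, hj'.2.1.trans hj'.2.2.symm⟩
  -- t appears at most once in a nonzero row on J
  have tfib : ∀ i : Fin (2 * r + 5), i ≠ 0 → (J.filter fun j => c (i, j) = t).card ≤ 1 := by
    intro i hi
    have h := key 0 i (Ne.symm hi) t
    have heq : (J.filter fun j => c (0, j) = t ∧ c (i, j) = t)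
        = J.filter fun j => c (i, j) = t := by
      apply Finset.filter_congr
      intro j hj
      simp only [hJdef, mem_filter, mem_univ, true_and] at hj
      simp [hj]
    rwa [heq] at h
  -- dominant color in a bad row
  have dom : ∀ i : Fin (2 * r + 5), i ≠ 0 →
      ((J.image fun j => c (i, j)).filter fun s => s ≠ t).card ≤ 2 →
      ∃ s : Fin r, s ≠ t ∧ J.card ≤ 2 * (J.filter fun j => c (i, j) = s).card + 1 := by
    intro i hi hS
    set S := (J.image fun j => c (i, j)).filter fun s => s ≠ t with hSdef
    set K := J.filter fun j => c (i, j) ≠ t with hKdef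
    have hsplit : (J.filter fun j => c (i, j) = t).card + K.card = J.card :=
      Finset.card_filter_add_card_filter_not _
    have hKcard : J.card ≤ K.card + 1 := by
      have := tfib i hi
      omega
    have hcover : K ⊆ S.biUnion fun s => J.filter fun j => c (i, j) = s := by
      intro j hj
      simp only [hKdef, mem_filter] at hj
      simp only [mem_biUnion, hSdef, mem_filter, mem_image]
      exact ⟨c (i, j), ⟨⟨j, hj.1, rfl⟩, hj.2⟩, hj.1, rfl⟩
    have hsum : K.card ≤ ∑ s ∈ S, (J.filter fun j => c (i, j) = s).card :=
      le_trans (Finset.card_le_card hcover) (Finset.card_biUnion_le)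
    have hSne : S.Nonempty := by
      have hKne : K.Nonempty := Finset.card_pos.mp (by omega)
      obtain ⟨j, hj⟩ := hKne
      simp only [hKdef, mem_filter] at hj
      exact ⟨c (i, j), by simp only [hSdef, mem_filter, mem_image]; exact ⟨⟨j, hj.1, rfl⟩, hj.2⟩⟩
    obtain ⟨s, hsS, hmax⟩ := Finset.exists_mem_eq_sup S hSne
      (fun s => (J.filter fun j => c (i, j) = s).card)
    have hbound : ∑ x ∈ S, (J.filter fun j => c (i, j) = x).card
        ≤ S.card * (J.filter fun j => c (i, j) = s).card := by
      have h := Finset.sum_le_card_nsmul S (fun x => (J.filter fun j => c (i, j) = x).card)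
        ((J.filter fun j => c (i, j) = s).card)
        (fun x hx => hmax ▸ Finset.le_sup (f := fun x => (J.filter fun j => c (i, j) = x).card) hx)
      simpa [smul_eq_mul] using h
    have hst : s ≠ t := (Finset.mem_filter.mp hsS).2
    refine ⟨s, hst, ?_⟩
    have : S.card * (J.filter fun j => c (i, j) = s).card
        ≤ 2 * (J.filter fun j => c (i, j) = s).card :=
      Nat.mul_le_mul_right _ hS
    omega
  -- the bad set
  set B := Finset.univ.filter fun i : Fin (2 * r + 5) =>
      i ≠ 0 ∧ ¬ (3 ≤ ((J.image fun j => c (i, j)).filter fun s => s ≠ t).card) with hBdef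
  have hNcard : (Finset.univ.filter fun i : Fin (2 * r + 5) => i ≠ 0).card = 2 * r + 4 := by
    rw [Finset.filter_ne']
    rw [Finset.card_erase_of_mem (Finset.mem_univ _)]
    simp
  have hBcard : 2 * r ≤ B.card := by
    have hsplit := Finset.card_filter_add_card_filter_not
      (s := Finset.univ.filter fun i : Fin (2 * r + 5) => i ≠ 0)
      (p := fun i => 3 ≤ ((J.image fun j => c (i, j)).filter fun s => s ≠ t).card)
    rw [Finset.filter_filter, Finset.filter_filter] at hsplit
    rw [hNcard] at hsplit
    rw [← hBdef] at hsplit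
    omega
  -- choose dominant color for every row (dummy elsewhere)
  haveI : Nontrivial (Fin r) := by
    constructor
    exact ⟨⟨0, by omega⟩, ⟨1, by omega⟩, by simp [Fin.ext_iff]⟩
  obtain ⟨s0, hs0⟩ := exists_ne t
  have hchoice : ∀ i : Fin (2 * r + 5), ∃ s : Fin r, s ≠ t ∧
      (i ∈ B → J.card ≤ 2 * (J.filter fun j => c (i, j) = s).card + 1) := by
    intro i
    by_cases hi : i ∈ B
    · simp only [hBdef, mem_filter, mem_univ, true_and] at hi
      obtain ⟨s, hs1, hs2⟩ := dom i hi.1 (by omega)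
      exact ⟨s, hs1, fun _ => hs2⟩
    · exact ⟨s0, hs0, fun h => absurd h hi⟩
  choose g hg1 hg2 using hchoice
  -- pigeonhole over bad rows
  have hmaps : ∀ i ∈ B, g i ∈ Finset.univ.filter fun s : Fin r => s ≠ t := fun i _ => by
    simp [hg1 i]
  have hTcard : (Finset.univ.filter fun s : Fin r => s ≠ t).card = r - 1 := by
    rw [Finset.filter_ne']
    rw [Finset.card_erase_of_mem (Finset.mem_univ _)]
    simp
  have hpig : ∃ s ∈ Finset.univ.filter fun s : Fin r => s ≠ t,
      2 < (B.filter fun i => g i = s).card := by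
    apply Finset.exists_lt_card_fiber_of_mul_lt_card_of_maps_to hmaps
    rw [hTcard]
    omega
  obtain ⟨s, hsT, hs3⟩ := hpig
  obtain ⟨T3, hT3sub, hT3card⟩ := Finset.exists_subset_card_eq hs3
  obtain ⟨a, b, d, hab, had, hbd, hT3⟩ := Finset.card_eq_three.mp hT3card
  have hmem : ∀ x ∈ T3, x ∈ B ∧ g x = s := fun x hx =>
    Finset.mem_filter.mp (hT3sub hx)
  have ha := hmem a (by simp [hT3]); have hb := hmem b (by simp [hT3])
  have hd := hmem d (by simp [hT3])
  -- the three fibers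
  set A : Fin (2 * r + 5) → Finset (Fin (11 * r + 1)) :=
    fun i => J.filter fun j => c (i, j) = s with hAdef
  have hAcard : ∀ x, x ∈ B → g x = s → J.card ≤ 2 * (A x).card + 1 := by
    intro x hx hgx
    have := hg2 x hx
    rwa [hgx] at this
  have h1 := hAcard a ha.1 ha.2
  have h2 := hAcard b hb.1 hb.2
  have h3 := hAcard d hd.1 hd.2
  have hint : ∀ x y : Fin (2 * r + 5), x ≠ y → (A x ∩ A y).card ≤ 1 := by
    intro x y hxy
    have := key x y hxy s
    rwa [Finset.filter_and] at this
  have i1 := hint a b hab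
  have i2 := hint a d had
  have i3 := hint b d hbd
  have hu1 := Finset.card_union_add_card_inter (A a) (A b)
  have hu2 := Finset.card_union_add_card_inter (A a ∪ A b) (A d)
  have hdistrib : (A a ∪ A b) ∩ A d = (A a ∩ A d) ∪ (A b ∩ A d) :=
    Finset.union_inter_distrib_right _ _ _
  have hk : ((A a ∪ A b) ∩ A d).card ≤ (A a ∩ A d).card + (A b ∩ A d).card := by
    rw [hdistrib]; exact Finset.card_union_le _ _
  have hsubJ : (A a ∪ A b ∪ A d) ⊆ J := by
    intro j hj
    simp only [Finset.mem_union, hAdef, mem_filter] at hj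
    rcases hj with (h | h) | h <;> exact h.1
  have huJ : (A a ∪ A b ∪ A d).card ≤ J.card := Finset.card_le_card hsubJ
  omega
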